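/- Let f(z) = z^d on S^1 with d ≥ 2. If p and q are two distinct critical chords of S^1 that are disjoint in the open unit disk, then ρ(p, q) ≥ 1/d. -/

import Mathlib

open MeasureTheory Set Metric Filter Topology

noncomputable section

abbrev S1 := AddCircle (1 : ℝ)

def fd (d : ℕ) : S1 → S1 := fun x => d • x

def len (A : Set S1) : ℝ := (volume A).toReal

def IsHole (B H : Set S1) : Prop := ∃ x ∈ Bᶜ, H = connectedComponentIn Bᶜ x

def openArc (u w : S1) : Set S1 := {x | SBtw.sbtw u x w}

def OrientPresOn (g : S1 → S1) (B : Set S1) : Prop :=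
  Set.InjOn g B ∧ ∀ a ∈ B, ∀ b ∈ B, ∀ c ∈ B, SBtw.sbtw a b c → SBtw.sbtw (g a) (g b) (g c)

def emb (x : S1) : ℂ := (AddCircle.toCircle x : ℂ)

def chord (a b : S1) : Set ℂ := segment ℝ (emb a) (emb b)

def CH (A : Set S1) : Set ℂ := convexHull ℝ (emb '' A)

def Wandering (d N : ℕ) (T : Set S1) : Prop :=
  ∀ i j : ℕ, ((fd d)^[i] '' T).ncard = N ∧
    (i ≠ j → Disjoint (CH ((fd d)^[i] '' T)) (CH ((fd d)^[j] '' T)))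

def IsHoleEnum (B : Set S1) {N : ℕ} (H : Fin N → Set S1) : Prop :=
  Function.Injective H ∧ (∀ k, IsHole B (H k)) ∧ (∀ G, IsHole B G → ∃ k, H k = G) ∧
  ∀ k l : Fin N, k ≤ l → len (H k) ≤ len (H l)

def rem (d : ℕ) (s : ℝ) : ℝ := s - (⌊(d : ℝ) * s⌋ : ℝ) / d

def ImageHoleRel (g : S1 → S1) (H K : Set S1) : Prop :=
  ∃ u w : S1, u ≠ w ∧ H = openArc u w ∧ K = openArc (g u) (g w)

def InLimitSet (d : ℕ) (T : Set S1) (a b : S1) : Prop :=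
  ∃ φ : ℕ → ℕ, StrictMono φ ∧ ∃ u v : ℕ → S1,
    (∀ n, u n ∈ (fd d)^[φ n] '' T ∧ v n ∈ (fd d)^[φ n] '' T) ∧
    Tendsto (fun n => hausdorffDist (chord (u n) (v n)) (chord a b)) atTop (nhds 0)

lemma s1_coe_eq_coe {x y : ℝ} : (x : S1) = (y : S1) ↔ ∃ n : ℤ, x - y = (n : ℝ) := by
  rw [QuotientAddGroup.eq, AddSubgroup.mem_zmultiples_iff]
  constructor
  · rintro ⟨z, hz⟩; exact ⟨-z, by rw [zsmul_eq_mul, mul_one] at hz; push_cast; linarith⟩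
  · rintro ⟨n, hn⟩; exact ⟨-n, by rw [zsmul_eq_mul, mul_one]; push_cast; linarith⟩

lemma s1_sbtw_iff {a b c : ℝ} :
    SBtw.sbtw (a : S1) (b : S1) (c : S1) ↔
      toIocMod one_pos a b < toIcoMod one_pos a c := by
  rw [sbtw_iff_btw_not_btw]
  have hrev : Btw.btw (c : S1) (b : S1) (a : S1) ↔ Btw.btw (a : S1) (c : S1) (b : S1) := by
    rw [btw_cyclic]
  rw [hrev]
  rw [QuotientAddGroup.btw_coe_iff, QuotientAddGroup.btw_coe_iff]
  by_cases hba : a ≡ b [PMOD (1:ℝ)]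
  · rw [(AddCommGroup.modEq_iff_toIcoMod_eq_left one_pos).1 hba, (AddCommGroup.modEq_iff_toIocMod_eq_right one_pos).1 hba]
    have h3 := toIcoMod_lt_right one_pos a c
    constructor
    · rintro ⟨-, h⟩; exact absurd h3.le h
    · intro h; linarith
  · rw [← (AddCommGroup.not_modEq_iff_toIcoMod_eq_toIocMod one_pos).1 hba]
    by_cases hca : a ≡ c [PMOD (1:ℝ)]
    · rw [(AddCommGroup.modEq_iff_toIcoMod_eq_left one_pos).1 hca, (AddCommGroup.modEq_iff_toIocMod_eq_right one_pos).1 hca]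
      have h1 := left_le_toIcoMod one_pos a b
      have h2 := toIcoMod_lt_right one_pos a b
      constructor
      · rintro ⟨-, h⟩; exact absurd h1 h
      · intro h; linarith
    · rw [← (AddCommGroup.not_modEq_iff_toIcoMod_eq_toIocMod one_pos).1 hca, not_le]
      exact and_iff_right_of_imp le_of_lt

lemma coe_toIcoMod (a x : ℝ) : ((toIcoMod one_pos a x : ℝ) : S1) = (x : S1) := by
  rw [s1_coe_eq_coe]
  exact ⟨-(toIcoDiv one_pos a x), by simp [toIcoMod, zsmul_eq_mul]⟩

lemma coe_toIocMod (a x : ℝ) : ((toIocMod one_pos a x : ℝ) : S1) = (x : S1) := by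
  rw [s1_coe_eq_coe]
  exact ⟨-(toIocDiv one_pos a x), by simp [toIocMod, zsmul_eq_mul]⟩

lemma openArc_eq_image (u w : ℝ) :
    openArc (u : S1) (w : S1) = (fun x : ℝ => (x : S1)) '' Ioo u (toIcoMod one_pos u w) := by
  ext z
  induction z using QuotientAddGroup.induction_on with
  | H x =>
    simp only [openArc, mem_setOf_eq, mem_image]
    rw [s1_sbtw_iff]
    constructor
    · intro h
      exact ⟨toIocMod one_pos u x, ⟨left_lt_toIocMod one_pos u x, h⟩, coe_toIocMod u x⟩
    · rintro ⟨y, ⟨hy1, hy2⟩, hyx⟩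
      have hyt : y ≤ u + 1 := le_of_lt (hy2.trans (toIcoMod_lt_right one_pos u w))
      obtain ⟨n, hn⟩ := s1_coe_eq_coe.mp hyx
      have : toIocMod one_pos u x = y := by
        rw [toIocMod_eq_iff]
        exact ⟨⟨hy1, hyt⟩, ⟨-n, by rw [zsmul_eq_mul]; push_cast; linarith⟩⟩
      rw [this]; exact hy2

lemma openArc_self (x : S1) : openArc x x = ∅ := by
  ext y
  simp only [openArc, mem_setOf_eq, mem_empty_iff_false, iff_false]
  exact sbtw_irrefl_left_right

lemma len_openArc (u w : ℝ) (h : (w : S1) ≠ (u : S1)) :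
    len (openArc (u:S1) (w:S1)) = toIcoMod one_pos u w - u := by
  set t := toIcoMod one_pos u w with ht
  have htu : u < t := by
    rcases (left_le_toIcoMod one_pos u w).lt_or_eq with h' | h'
    · exact h'
    · exact absurd (AddCommGroup.modEq_iff_eq_mod_zmultiples.mp
        ((AddCommGroup.modEq_iff_toIcoMod_eq_left one_pos).2 h'.symm)) h.symm
  have ht1 : t < u + 1 := toIcoMod_lt_right one_pos u w
  rw [openArc_eq_image]
  have hopen : IsOpen ((fun x : ℝ => (x : S1)) '' Ioo u t) :=
    QuotientAddGroup.isOpenMap_coe _ isOpen_Ioo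
  rw [len, AddCircle.add_projection_respects_measure (T := 1) u hopen.measurableSet]
  have hset : QuotientAddGroup.mk ⁻¹' ((fun x : ℝ => (x : S1)) '' Ioo u t) ∩ Ioc u (u + 1)
      = Ioo u t := by
    apply Subset.antisymm
    · rintro x ⟨hx1, hx2⟩
      obtain ⟨y, hy, hyx⟩ := hx1
      obtain ⟨n, hn⟩ := s1_coe_eq_coe.mp hyx
      have hn0 : n = 0 := by
        have h1 : (-1 : ℝ) < n := by
          have := hx2.1; have := hy.2; simp only [mem_Ioc, mem_Ioo] at *; linarith
        have h2 : (n : ℝ) < 1 := by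
          have := hx2.2; have := hy.1; simp only [mem_Ioc, mem_Ioo] at *; linarith
        have h1' : (-1 : ℤ) < n := by exact_mod_cast h1
        have h2' : n < (1 : ℤ) := by exact_mod_cast h2
        omega
      rw [hn0] at hn
      have : y = x := by push_cast at hn; linarith
      rwa [← this]
    · intro x hx
      exact ⟨⟨x, hx, rfl⟩, ⟨hx.1, le_of_lt (hx.2.trans ht1)⟩⟩
  rw [hset, Real.volume_Ioo, ENNReal.toReal_ofReal (by linarith)]

lemma fd_coe (d : ℕ) (x : ℝ) : fd d (x : S1) = ((d * x : ℝ) : S1) := by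
  show d • (x : S1) = _
  rw [← AddCircle.coe_nsmul, nsmul_eq_mul]

lemma s1_eq_of_coe_eq {x y : ℝ} (h : (x : S1) = (y : S1)) (h1 : -1 < x - y) (h2 : x - y < 1) :
    x = y := by
  obtain ⟨n, hn⟩ := s1_coe_eq_coe.mp h
  have e1 : (-1 : ℝ) < n := by rw [← hn]; exact h1
  have e2 : (n : ℝ) < 1 := by rw [← hn]; exact h2
  have e1' : (-1 : ℤ) < n := by exact_mod_cast e1
  have e2' : n < (1 : ℤ) := by exact_mod_cast e2
  have : n = 0 := by omega
  rw [this] at hn; push_cast at hn; linarith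


/-- two distinct critical chords disjoint in the open disk, with
endpoints in (weak) cyclic order a,b,c,e, have ρ = len(b,c)+len(e,a) ≥ 1/d. -/
theorem stmt8 (d : ℕ) (hd : 2 ≤ d) (a b c e : S1)
    (hab : a ≠ b) (hce : c ≠ e)
    (hcr1 : fd d a = fd d b) (hcr2 : fd d c = fd d e)
    (hne : ({a, b} : Set S1) ≠ ({c, e} : Set S1))
    (ho1 : SBtw.sbtw a b c ∨ b = c) (ho2 : SBtw.sbtw c e a ∨ e = a) :
    1 / (d : ℝ) ≤ len (openArc b c) + len (openArc e a) := by
  obtain ⟨A, rfl⟩ := QuotientAddGroup.mk_surjective a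
  obtain ⟨b0, rfl⟩ := QuotientAddGroup.mk_surjective b
  obtain ⟨c0, rfl⟩ := QuotientAddGroup.mk_surjective c
  obtain ⟨e0, rfl⟩ := QuotientAddGroup.mk_surjective e
  obtain ⟨B, hBcoe, hB⟩ : ∃ B : ℝ, (B : S1) = (b0 : S1) ∧ B ∈ Ico A (A + 1) :=
    ⟨toIcoMod one_pos A b0, coe_toIcoMod A b0, toIcoMod_mem_Ico one_pos A b0⟩
  obtain ⟨C, hCcoe, hC⟩ : ∃ C : ℝ, (C : S1) = (c0 : S1) ∧ C ∈ Ico A (A + 1) :=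
    ⟨toIcoMod one_pos A c0, coe_toIcoMod A c0, toIcoMod_mem_Ico one_pos A c0⟩
  obtain ⟨E, hEcoe, hE⟩ : ∃ E : ℝ, (E : S1) = (e0 : S1) ∧ E ∈ Ico A (A + 1) :=
    ⟨toIcoMod one_pos A e0, coe_toIcoMod A e0, toIcoMod_mem_Ico one_pos A e0⟩
  simp only [mem_Ico] at hB hC hE
  rw [← hBcoe] at hab hcr1 hne ho1
  rw [← hCcoe] at hce hcr2 hne ho1 ho2
  rw [← hEcoe] at hce hcr2 hne ho2
  rw [← hBcoe, ← hCcoe, ← hEcoe]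
  have hd0 : (0 : ℝ) < d := by
    have : (2 : ℝ) ≤ d := by exact_mod_cast hd
    linarith
  have hAB : A < B := by
    rcases hB.1.lt_or_eq with h | h
    · exact h
    · exact absurd (by rw [h]) hab
  rw [fd_coe, fd_coe] at hcr1 hcr2
  obtain ⟨j, hj⟩ := s1_coe_eq_coe.mp hcr1
  obtain ⟨k, hk⟩ := s1_coe_eq_coe.mp hcr2
  -- order facts
  have hBC : B ≤ C := by
    rcases ho1 with h | h
    · rw [s1_sbtw_iff, (toIocMod_eq_self one_pos).2 ⟨hAB, hB.2.le⟩,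
        (toIcoMod_eq_self one_pos).2 hC] at h
      exact h.le
    · exact (s1_eq_of_coe_eq h (by linarith [hB.2, hC.1]) (by linarith [hB.1, hC.2])).le
  have hAC : A < C := lt_of_lt_of_le hAB hBC
  have len1 : len (openArc (B : S1) (C : S1)) = C - B := by
    by_cases hbc : ((C : ℝ) : S1) = (B : S1)
    · have hCB : C = B := s1_eq_of_coe_eq hbc (by linarith [hB.2, hC.1]) (by linarith [hB.1, hC.2])
      rw [show ((C : ℝ) : S1) = (B : S1) from hbc, openArc_self]
      simp [len, hCB]
    · rw [len_openArc B C hbc, (toIcoMod_eq_self one_pos).2 ⟨hBC, by linarith [hC.2]⟩]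
  rcases ho2 with hsb | hea
  · -- strict case : C < E < A + 1
    rw [s1_sbtw_iff] at hsb
    have h2 : toIcoMod one_pos C A = A + 1 := by
      rw [toIcoMod_eq_iff]
      exact ⟨⟨hC.2.le, by linarith⟩, ⟨-1, by rw [zsmul_eq_mul]; push_cast; ring⟩⟩
    rw [h2] at hsb
    have hCE : C < E := by
      by_contra hle
      push_neg at hle
      have hEC : E ≠ C := fun h => hce (by rw [h])
      have hlt : E < C := lt_of_le_of_ne hle hEC
      have h3 : toIocMod one_pos C E = E + 1 := by
        rw [toIocMod_eq_iff]
        exact ⟨⟨by linarith [hE.1, hC.2], by linarith⟩, ⟨-1, by rw [zsmul_eq_mul]; push_cast; ring⟩⟩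
      rw [h3] at hsb
      linarith [hE.1]
    have len2 : len (openArc (E : S1) (A : S1)) = A + 1 - E := by
      have hae : ((A : ℝ) : S1) ≠ (E : S1) := by
        intro h
        have : A = E := s1_eq_of_coe_eq h (by linarith [hE.2]) (by linarith [hE.1])
        linarith
      rw [len_openArc E A hae,
        show toIcoMod one_pos E A = A + 1 from by
          rw [toIcoMod_eq_iff]
          exact ⟨⟨by linarith [hE.2], by linarith⟩, ⟨-1, by rw [zsmul_eq_mul]; push_cast; ring⟩⟩]
    rw [len1, len2]
    have expand : (d : ℝ) * ((C - B) + (A + 1 - E)) = (d : ℝ) + j + k := by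
      linear_combination hj + hk
    have hpos : (0 : ℝ) < (C - B) + (A + 1 - E) := by linarith [hE.2]
    have hkey : (1 : ℝ) ≤ (d : ℝ) + j + k := by
      have h0 : (0 : ℝ) < (d : ℝ) + j + k := by
        have := mul_pos hd0 hpos; linarith [expand]
      have h0' : (0 : ℤ) < (d : ℤ) + j + k := by exact_mod_cast h0
      have h1' : (1 : ℤ) ≤ (d : ℤ) + j + k := h0'
      exact_mod_cast h1'
    rw [div_le_iff₀ hd0]
    linarith [expand, hkey]
  · -- e = a case
    have hEA : E = A := s1_eq_of_coe_eq hea (by linarith [hE.2]) (by linarith [hE.1])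
    have len2 : len (openArc (E : S1) (A : S1)) = 0 := by
      rw [show ((E : ℝ) : S1) = (A : S1) from hea, openArc_self]
      simp [len]
    have hBCne : B ≠ C := by
      intro h
      apply hne
      rw [← h, hea]
      exact Set.pair_comm _ _
    have hBC' : B < C := lt_of_le_of_ne hBC hBCne
    rw [len1, len2, add_zero]
    rw [hEA] at hk
    have expand : (d : ℝ) * (C - B) = (j : ℝ) + k := by
      linear_combination hj + hk
    have hkey : (1 : ℝ) ≤ (j : ℝ) + k := by
      have hpos : (0 : ℝ) < C - B := by linarith
      have h0 : (0 : ℝ) < (j : ℝ) + k := by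
        have := mul_pos hd0 hpos; linarith [expand]
      have h0' : (0 : ℤ) < j + k := by exact_mod_cast h0
      have h1' : (1 : ℤ) ≤ j + k := h0'
      exact_mod_cast h1'
    rw [div_le_iff₀ hd0]
    linarith [expand, hkey]
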